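/- Let 𝒢 ⊆ ℋ be sub-σ-algebras of 𝒜. If C*_A(P, ℋ) ⊆ C*_A(P, 𝒢), then 𝒢 is sufficient for ℋ with respect to A₁ under P, i.e. P[A₁ ∩ H] = E_P[1_H · P[A₁ | 𝒢]] for every H ∈ ℋ (equivalently P[A₁ | 𝒢] = P[A₁ | ℋ] P-a.s.). -/

import Mathlib

open MeasureTheory Set
open scoped ENNReal NNReal

/-- `Ψ` is an `m`-measurable version of the conditional probability of `A` given `m` under `P`
(a measure on the ambient σ-algebra `mΩ`): for every `m`-measurable `H`,
`P (A ∩ H) = ∫_H Ψ dP`. -/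
def IsCondVersion {Ω : Type*} [mΩ : MeasurableSpace Ω] (m : MeasurableSpace Ω)
    (P : @Measure Ω mΩ) (A : Set Ω) (Ψ : Ω → ℝ) : Prop :=
  Measurable[m] Ψ ∧
  ∀ H : Set Ω, MeasurableSet[m] H → (P (A ∩ H)).toReal = ∫ ω in H, Ψ ω ∂P

/-- `P` and `Q` are related by covariate shift w.r.t. the sub-σ-algebra `m`: there is a common
`m`-measurable `[0,1]`-valued version `Ψ` of the conditional probability of `A` given `m`. -/
def CovShift {Ω : Type*} [mΩ : MeasurableSpace Ω] (m : MeasurableSpace Ω)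
    (P Q : @Measure Ω mΩ) (A : Set Ω) : Prop :=
  ∃ Ψ : Ω → ℝ, (∀ ω, Ψ ω ∈ Set.Icc (0 : ℝ) 1) ∧
    @IsCondVersion Ω mΩ m P A Ψ ∧ @IsCondVersion Ω mΩ m Q A Ψ

/-- `Q` is absolutely continuous w.r.t. `P` on the sub-σ-algebra `m`. -/
def AbsContOn {Ω : Type*} [mΩ : MeasurableSpace Ω] (m : MeasurableSpace Ω)
    (P Q : @Measure Ω mΩ) : Prop :=
  ∀ N : Set Ω, MeasurableSet[m] N → P N = 0 → Q N = 0

/-- `C*_A(P, m)`: the probability measures `Q` absolutely continuous w.r.t. `P` on `m` that are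
related to `P` by covariate shift w.r.t. `m`. -/
def CAstar {Ω : Type*} [mΩ : MeasurableSpace Ω] (m : MeasurableSpace Ω)
    (P : @Measure Ω mΩ) (A : Set Ω) : Set (@Measure Ω mΩ) :=
  {Q | @IsProbabilityMeasure Ω mΩ Q ∧ @AbsContOn Ω mΩ m P Q ∧ @CovShift Ω mΩ m P Q A}

theorem stmt10_aux {Ω : Type} (G H : MeasurableSpace Ω) [mΩ : MeasurableSpace Ω]
    (hGH : G ≤ H) (hH : H ≤ mΩ)
    (A₁ : Set Ω) (hA₁ : MeasurableSet[mΩ] A₁)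
    (P : @Measure Ω mΩ) (hP : @IsProbabilityMeasure Ω mΩ P)
    (hsub : @CAstar Ω mΩ H P A₁ ⊆ @CAstar Ω mΩ G P A₁)
    (ΨG : Ω → ℝ) (hΨGrange : ∀ ω, ΨG ω ∈ Set.Icc (0 : ℝ) 1)
    (hΨG : @IsCondVersion Ω mΩ G P A₁ ΨG) :
    @IsCondVersion Ω mΩ H P A₁ ΨG := by
  have hmG : G ≤ mΩ := hGH.trans hH
  refine ⟨hΨG.1.mono hGH le_rfl, ?_⟩
  intro S hS
  have hSm : MeasurableSet S := hH _ hS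
  -- boundedness ⇒ integrability helper
  have int_bdd : ∀ (Ψ : Ω → ℝ), Measurable Ψ → (∀ ω, ‖Ψ ω‖ ≤ 1) →
      ∀ T : Set Ω, Integrable Ψ (P.restrict T) := by
    intro Ψ hm hb T
    exact (integrable_const (1:ℝ)).mono' hm.aestronglyMeasurable (ae_of_all _ hb)
  have norm_of_Icc : ∀ {Ψ : Ω → ℝ}, (∀ ω, Ψ ω ∈ Set.Icc (0:ℝ) 1) → ∀ ω, ‖Ψ ω‖ ≤ 1 := by
    intro Ψ h ω
    have := h ω
    rw [Real.norm_eq_abs, abs_le]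
    exact ⟨by linarith [this.1], this.2⟩
  -- the conditional expectation version w.r.t. H
  set f : Ω → ℝ := A₁.indicator (fun _ => 1) with hf_def
  have hf_int : Integrable f P := (integrable_const (1:ℝ)).indicator hA₁
  set Ψ₀ : Ω → ℝ := P[f | H] with hΨ₀_def
  set ΨH : Ω → ℝ := fun ω => max 0 (min 1 (Ψ₀ ω)) with hΨH_def
  have hΨH_meas : Measurable[H] ΨH :=
    measurable_const.max (measurable_const.min stronglyMeasurable_condExp.measurable)
  have hΨH_range : ∀ ω, ΨH ω ∈ Set.Icc (0:ℝ) 1 := by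
    intro ω
    exact ⟨le_max_left _ _, max_le (by norm_num) (min_le_left _ _)⟩
  have hΨH_ae : ΨH =ᵐ[P] Ψ₀ := by
    have h0 : (0:Ω → ℝ) ≤ᵐ[P] Ψ₀ := by
      refine condExp_nonneg (ae_of_all _ ?_)
      intro ω
      by_cases hω : ω ∈ A₁ <;> simp [hf_def, hω]
    have h1 : Ψ₀ ≤ᵐ[P] fun _ => (1:ℝ) := by
      have := condExp_mono (m := H) (μ := P) hf_int (integrable_const (1:ℝ))
        (ae_of_all _ fun ω => by
          by_cases hω : ω ∈ A₁ <;> simp [hf_def, hω])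
      rwa [condExp_const hH (1:ℝ)] at this
    filter_upwards [h0, h1] with ω h0ω h1ω
    simp only [Pi.zero_apply] at h0ω
    simp only [hΨH_def]
    rw [min_eq_right h1ω, max_eq_right h0ω]
  have hΨH_ver : ∀ T : Set Ω, MeasurableSet[H] T →
      (P (A₁ ∩ T)).toReal = ∫ ω in T, ΨH ω ∂P := by
    intro T hT
    have h1 : ∫ ω in T, ΨH ω ∂P = ∫ ω in T, Ψ₀ ω ∂P :=
      integral_congr_ae (ae_restrict_of_ae hΨH_ae)
    have h2 : ∫ ω in T, Ψ₀ ω ∂P = ∫ ω in T, f ω ∂P :=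
      setIntegral_condExp hH hf_int hT
    have h3 : ∫ ω in T, f ω ∂P = (P (A₁ ∩ T)).toReal := by
      rw [hf_def, integral_indicator_const (1:ℝ) hA₁, Measure.real_def, Measure.restrict_apply hA₁]
      simp
    rw [h1, h2, h3]
  -- the tilted measure Q
  set c : ℝ≥0∞ := (1 + P S)⁻¹ with hc_def
  have hPS_top : P S ≠ ∞ := (measure_lt_top P S).ne
  have hden0 : (1 : ℝ≥0∞) + P S ≠ 0 := by simp
  have hden_top : (1 : ℝ≥0∞) + P S ≠ ∞ := by
    simp [ENNReal.add_ne_top, hPS_top]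
  have hc0 : c ≠ 0 := ENNReal.inv_ne_zero.mpr hden_top
  have hc_top : c ≠ ∞ := ENNReal.inv_ne_top.mpr hden0
  set gE : Ω → ℝ≥0∞ := fun ω => c * (S.indicator 1 ω + 1) with hgE_def
  have hgE_meas : Measurable gE :=
    ((measurable_const.indicator hSm).add measurable_const).const_mul c
  have hgE_top : ∀ ω, gE ω ≠ ∞ := by
    intro ω
    refine ENNReal.mul_ne_top hc_top ?_
    by_cases hω : ω ∈ S <;> simp [hgE_def, hω]
  set Q : Measure Ω := P.withDensity gE with hQ_def
  set gN : Ω → ℝ≥0 := fun ω => (gE ω).toNNReal with hgN_def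
  have hgN_coe : ∀ ω, ((gN ω : ℝ≥0∞)) = gE ω := fun ω => ENNReal.coe_toNNReal (hgE_top ω)
  have hQ_alt : Q = P.withDensity (fun ω => (gN ω : ℝ≥0∞)) := by
    rw [hQ_def, funext hgN_coe]
  have hgN_meas : Measurable gN := hgE_meas.ennreal_toNNReal
  set dR : ℝ := c.toReal with hdR_def
  have hdR_pos : 0 < dR := ENNReal.toReal_pos hc0 hc_top
  have hsmul : ∀ (Ψ : Ω → ℝ) (ω : Ω), (gN ω) • Ψ ω = dR * (S.indicator Ψ ω + Ψ ω) := by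
    intro Ψ ω
    rw [NNReal.smul_def, smul_eq_mul]
    have hcoe : ((gN ω : ℝ)) = (gE ω).toReal := rfl
    rw [hcoe]
    by_cases hω : ω ∈ S
    · simp only [hgE_def, Set.indicator_of_mem hω, Pi.one_apply]
      rw [ENNReal.toReal_mul]
      norm_num
      ring
    · simp only [hgE_def, Set.indicator_of_notMem hω]
      rw [ENNReal.toReal_mul]
      norm_num
      exact Or.inl hdR_def.symm
  -- key identity for integrals against Q
  have key : ∀ (Ψ : Ω → ℝ), Measurable Ψ → (∀ ω, ‖Ψ ω‖ ≤ 1) → ∀ T : Set Ω, MeasurableSet T →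
      ∫ ω in T, Ψ ω ∂Q = dR * (∫ ω in S ∩ T, Ψ ω ∂P + ∫ ω in T, Ψ ω ∂P) := by
    intro Ψ hΨm hΨb T hTm
    rw [hQ_alt, setIntegral_withDensity_eq_setIntegral_smul hgN_meas Ψ hTm]
    calc ∫ ω in T, (gN ω) • Ψ ω ∂P
        = ∫ ω in T, dR * (S.indicator Ψ ω + Ψ ω) ∂P :=
          integral_congr_ae (ae_of_all _ fun ω => hsmul Ψ ω)
      _ = dR * ∫ ω in T, (S.indicator Ψ ω + Ψ ω) ∂P := integral_const_mul dR _
      _ = dR * (∫ ω in T, S.indicator Ψ ω ∂P + ∫ ω in T, Ψ ω ∂P) := by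
          rw [integral_add ((int_bdd Ψ hΨm hΨb T).indicator hSm) (int_bdd Ψ hΨm hΨb T)]
      _ = dR * (∫ ω in S ∩ T, Ψ ω ∂P + ∫ ω in T, Ψ ω ∂P) := by
          rw [integral_indicator hSm, Measure.restrict_restrict hSm]
  -- value of Q on measurable sets (via toReal)
  have hQ_val : ∀ B : Set Ω, MeasurableSet B →
      (Q B).toReal = dR * ((P (S ∩ B)).toReal + (P B).toReal) := by
    intro B hB
    have h1 : ∫ ω in B, (1:ℝ) ∂Q = (Q B).toReal := by
      rw [setIntegral_const]; simp [Measure.real_def]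
    have h2 := key (fun _ => (1:ℝ)) measurable_const (fun ω => by norm_num) B hB
    rw [h1] at h2
    rw [h2]
    congr 1
    rw [setIntegral_const, setIntegral_const]
    simp [Measure.real_def]
  -- Q is a probability measure
  have hQ_prob : IsProbabilityMeasure Q := by
    constructor
    rw [hQ_def, withDensity_apply _ MeasurableSet.univ, Measure.restrict_univ, hgE_def]
    show ∫⁻ a, c * (S.indicator 1 a + 1) ∂P = 1
    rw [lintegral_const_mul c (f := fun a => S.indicator 1 a + 1) ((measurable_one.indicator hSm).add measurable_const)]
    rw [lintegral_add_right _ measurable_const]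
    rw [show ∫⁻ a, S.indicator 1 a ∂P = P S by
      rw [lintegral_indicator hSm]; simp]
    rw [lintegral_one, measure_univ, hc_def, add_comm (P S) 1]
    exact ENNReal.inv_mul_cancel hden0 hden_top
  -- Q is absolutely continuous w.r.t. P on H
  have hQ_ac : AbsContOn H P Q := by
    intro N hN h0
    rw [hQ_def, withDensity_apply _ (hH _ hN), Measure.restrict_eq_zero.mpr h0]
    simp
  -- ΨH is a common version for P and Q given H
  have hΨH_verQ : ∀ T : Set Ω, MeasurableSet[H] T →
      (Q (A₁ ∩ T)).toReal = ∫ ω in T, ΨH ω ∂Q := by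
    intro T hT
    have hTm : MeasurableSet T := hH _ hT
    have hST : MeasurableSet[H] (S ∩ T) := hS.inter hT
    rw [hQ_val _ (hA₁.inter hTm),
      key ΨH (hΨH_meas.mono hH le_rfl) (norm_of_Icc hΨH_range) T hTm,
      ← hΨH_ver T hT, ← hΨH_ver (S ∩ T) hST, Set.inter_left_comm S A₁ T]
  have hQmem : Q ∈ CAstar H P A₁ :=
    ⟨hQ_prob, hQ_ac, ΨH, hΨH_range, ⟨hΨH_meas, hΨH_ver⟩, ⟨hΨH_meas, hΨH_verQ⟩⟩
  obtain ⟨-, -, Φ, hΦrange, hΦP, hΦQ⟩ := hsub hQmem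
  -- Φ agrees with ΨG P-a.e.
  have hΦΨG : Φ =ᵐ[P] ΨG := by
    refine ae_eq_of_forall_setIntegral_eq_of_sigmaFinite' hmG
      (fun s _ _ => (int_bdd Φ (hΦP.1.mono hmG le_rfl) (norm_of_Icc hΦrange) s))
      (fun s _ _ => (int_bdd ΨG (hΨG.1.mono hmG le_rfl) (norm_of_Icc hΨGrange) s))
      (fun s hs _ => ?_) ?_ ?_
    · rw [← hΦP.2 s hs, ← hΨG.2 s hs]
    · exact ⟨Φ, hΦP.1.stronglyMeasurable, Filter.EventuallyEq.refl _ _⟩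
    · exact ⟨ΨG, hΨG.1.stronglyMeasurable, Filter.EventuallyEq.refl _ _⟩
  -- evaluate the Q-version property of Φ at univ
  have hmain := hΦQ.2 Set.univ (@MeasurableSet.univ Ω G)
  rw [Set.inter_univ, hQ_val A₁ hA₁, Measure.restrict_univ] at hmain
  have hkeyΦ := key Φ (hΦP.1.mono hmG le_rfl) (norm_of_Icc hΦrange) Set.univ MeasurableSet.univ
  simp only [Measure.restrict_univ, Set.inter_univ] at hkeyΦ
  rw [hkeyΦ] at hmain
  have hΦ_univ : ∫ ω, Φ ω ∂P = (P A₁).toReal := by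
    have := hΦP.2 Set.univ (@MeasurableSet.univ Ω G)
    rw [Set.inter_univ, Measure.restrict_univ] at this
    exact this.symm
  have hΦS : ∫ ω in S, Φ ω ∂P = ∫ ω in S, ΨG ω ∂P :=
    integral_congr_ae (ae_restrict_of_ae hΦΨG)
  rw [hΦ_univ, hΦS] at hmain
  have h2 : (P (S ∩ A₁)).toReal + (P A₁).toReal = ∫ ω in S, ΨG ω ∂P + (P A₁).toReal :=
    mul_left_cancel₀ hdR_pos.ne' hmain
  rw [Set.inter_comm A₁ S]
  linarith

/-- If `C*_A(P, ℋ) ⊆ C*_A(P, 𝒢)` for `𝒢 ⊆ ℋ`, then `𝒢` is sufficient for `ℋ` w.r.t. `A₁`: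
any `[0,1]`-valued version of `P[A₁ | 𝒢]` is also a version of `P[A₁ | ℋ]`. -/
theorem stmt10 {Ω : Type} [mΩ : MeasurableSpace Ω]
    {G H : MeasurableSpace Ω} (hGH : G ≤ H) (hH : H ≤ mΩ)
    (A₁ : Set Ω) (hA₁ : MeasurableSet[mΩ] A₁)
    (P : @Measure Ω mΩ) (hP : @IsProbabilityMeasure Ω mΩ P)
    (hpos : 0 < P A₁) (hlt : P A₁ < 1)
    (hsub : @CAstar Ω mΩ H P A₁ ⊆ @CAstar Ω mΩ G P A₁)
    (ΨG : Ω → ℝ) (hΨGrange : ∀ ω, ΨG ω ∈ Set.Icc (0 : ℝ) 1)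
    (hΨG : @IsCondVersion Ω mΩ G P A₁ ΨG) :
    @IsCondVersion Ω mΩ H P A₁ ΨG :=
  @stmt10_aux Ω G H mΩ hGH hH A₁ hA₁ P hP hsub ΨG hΨGrange hΨG
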